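/- For every n ≥ 1 and d ≥ 1, the cardinality of the hyperbolic cross H_n^d = {μ ∈ ℕ₀^d : ∏_{j=1}^d (μ_j+1) ≤ n} satisfies #(H_n^d) ≤ n (1 + ln n)^{d-1}. -/

import Mathlib

private lemma hc_aux : ∀ d n N : ℕ, n ≤ N → 1 ≤ N →
    ∀ H : Finset (Fin (d + 1) → ℕ),
    (∀ μ : Fin (d + 1) → ℕ, μ ∈ H ↔ ∏ j, (μ j + 1) ≤ n) →
    (H.card : ℝ) ≤ n * (1 + Real.log N) ^ d := by
  intro d
  induction d with
  | zero =>
    intro n N hnN hN H hH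
    have hcard : H.card ≤ n := by
      have : H ⊆ (Finset.range n).image (fun k => (fun _ : Fin 1 => k)) := by
        intro μ hμ
        have h := (hH μ).mp hμ
        have h1 : μ 0 + 1 ≤ ∏ j, (μ j + 1) :=
          Finset.single_le_prod' (f := fun j => μ j + 1) (fun j _ => Nat.succ_pos _) (Finset.mem_univ 0)
        have h2 : μ 0 + 1 ≤ n := le_trans h1 h
        refine Finset.mem_image.mpr ⟨μ 0, Finset.mem_range.mpr (by omega), ?_⟩
        funext j
        have : j = 0 := Subsingleton.elim _ _
        rw [this]
      calc H.card ≤ _ := Finset.card_le_card this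
        _ ≤ (Finset.range n).card := Finset.card_image_le
        _ = n := Finset.card_range n
    have hlog : (0:ℝ) ≤ Real.log N := Real.log_nonneg (by exact_mod_cast hN)
    simp only [pow_zero, mul_one]
    exact_mod_cast hcard
  | succ d ih =>
    intro n N hnN hN H hH
    by_cases hn0 : n = 0
    · subst hn0
      have : H = ∅ := by
        refine Finset.eq_empty_of_forall_notMem fun μ hμ => ?_
        have h := (hH μ).mp hμ
        have : 0 < ∏ j, (μ j + 1) := Finset.prod_pos fun j _ => Nat.succ_pos _
        omega
      simp [this]
    have hn1 : 1 ≤ n := Nat.one_le_iff_ne_zero.mpr hn0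
    -- fiber over first coordinate
    have hmap : ∀ μ ∈ H, μ 0 ∈ Finset.range n := by
      intro μ hμ
      have h := (hH μ).mp hμ
      have h1 : μ 0 + 1 ≤ ∏ j, (μ j + 1) :=
        Finset.single_le_prod' (f := fun j => μ j + 1) (fun j _ => Nat.succ_pos _) (Finset.mem_univ 0)
      exact Finset.mem_range.mpr (by omega)
    have hcardsum := Finset.card_eq_sum_card_fiberwise hmap
    -- each fiber is (in bijection with) a hyperbolic cross of dimension d+1
    have key : ∀ k ∈ Finset.range n,
        ((H.filter fun μ => μ 0 = k).card : ℝ) ≤ (n / (k+1) : ℕ) * (1 + Real.log N) ^ d := by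
      intro k hk
      set H' : Finset (Fin (d + 1) → ℕ) := (H.filter fun μ => μ 0 = k).image Fin.tail with hH'
      have hcardeq : (H.filter fun μ => μ 0 = k).card = H'.card := by
        rw [hH']
        refine (Finset.card_image_of_injOn ?_).symm
        intro μ hμ ν hν htail
        simp only [Finset.mem_coe, Finset.mem_filter] at hμ hν
        funext j
        refine Fin.cases ?_ ?_ j
        · rw [hμ.2, hν.2]
        · intro i
          exact congrFun htail i
      have hmem : ∀ ν : Fin (d + 1) → ℕ, ν ∈ H' ↔ ∏ j, (ν j + 1) ≤ n / (k + 1) := by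
        intro ν
        rw [hH', Finset.mem_image]
        constructor
        · rintro ⟨μ, hμ, rfl⟩
          simp only [Finset.mem_filter] at hμ
          have h := (hH μ).mp hμ.1
          rw [Fin.prod_univ_succ] at h
          rw [Nat.le_div_iff_mul_le (Nat.succ_pos k)]
          have : μ 0 = k := hμ.2
          calc (∏ j : Fin (d+1), (Fin.tail μ j + 1)) * (k + 1)
              = (μ 0 + 1) * ∏ j : Fin (d+1), (μ j.succ + 1) := by
                rw [this, mul_comm]; rfl
            _ ≤ n := h
        · intro h
          refine ⟨Fin.cons k ν, ?_, Fin.tail_cons _ _⟩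
          rw [Nat.le_div_iff_mul_le (Nat.succ_pos k)] at h
          refine Finset.mem_filter.mpr ⟨(hH _).mpr ?_, Fin.cons_zero _ _⟩
          rw [Fin.prod_univ_succ]
          simp only [Fin.cons_zero, Fin.cons_succ]
          calc (k + 1) * ∏ j : Fin (d+1), (ν j + 1)
              = (∏ j : Fin (d+1), (ν j + 1)) * (k + 1) := mul_comm _ _
            _ ≤ n := h
      have hle : n / (k + 1) ≤ N := le_trans (Nat.div_le_self _ _) hnN
      rw [hcardeq]
      exact ih (n / (k + 1)) N hle hN H' hmem
    have hlogN : (0:ℝ) ≤ Real.log N := Real.log_nonneg (by exact_mod_cast hN)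
    have hP : (0:ℝ) ≤ (1 + Real.log N) ^ d := by positivity
    calc (H.card : ℝ)
        = ∑ k ∈ Finset.range n, ((H.filter fun μ => μ 0 = k).card : ℝ) := by
          exact_mod_cast congrArg Nat.cast hcardsum
      _ ≤ ∑ k ∈ Finset.range n, ((n / (k+1) : ℕ) : ℝ) * (1 + Real.log N) ^ d :=
          Finset.sum_le_sum key
      _ ≤ ∑ k ∈ Finset.range n, ((n : ℝ) / (k+1)) * (1 + Real.log N) ^ d := by
          refine Finset.sum_le_sum fun k _ => ?_
          have := Nat.cast_div_le (α := ℝ) (m := n) (n := k+1)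
          push_cast at this ⊢
          exact mul_le_mul_of_nonneg_right this hP
      _ = (∑ k ∈ Finset.range n, ((k:ℝ)+1)⁻¹) * n * (1 + Real.log N) ^ d := by
          rw [← Finset.sum_mul]
          congr 1
          rw [Finset.sum_mul]
          refine Finset.sum_congr rfl fun k _ => ?_
          rw [div_eq_mul_inv, mul_comm]
      _ ≤ (1 + Real.log N) * n * (1 + Real.log N) ^ d := by
          have hh : (∑ k ∈ Finset.range n, ((k:ℝ)+1)⁻¹) = (harmonic n : ℝ) := by
            rw [harmonic]; push_cast; simp [add_comm]
          have := harmonic_le_one_add_log n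
          have hlog : Real.log n ≤ Real.log N :=
            Real.log_le_log (by exact_mod_cast hn1) (by exact_mod_cast hnN)
          refine mul_le_mul_of_nonneg_right (mul_le_mul_of_nonneg_right ?_ (by positivity)) hP
          rw [hh]; linarith
      _ = n * (1 + Real.log N) ^ (d + 1) := by ring

/-- For `n ≥ 1` and `d ≥ 1`, the cardinality of the hyperbolic cross
`H_n^d = {μ ∈ ℕ₀^d : ∏ j (μ j + 1) ≤ n}` satisfies `#(H_n^d) ≤ n (1 + ln n)^(d-1)`. -/
theorem card_hyperbolicCross_le (d n : ℕ) (hd : 1 ≤ d) (hn : 1 ≤ n)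
    (H : Finset (Fin d → ℕ)) (hH : ∀ μ : Fin d → ℕ, μ ∈ H ↔ ∏ j, (μ j + 1) ≤ n) :
    (H.card : ℝ) ≤ n * (1 + Real.log n) ^ (d - 1) := by
  cases d with
  | zero => omega
  | succ e =>
    simpa using hc_aux e n n le_rfl hn H hH
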